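/- Summation via one multiplication: let v_0,…,v_{n−1} be natural numbers with v_i < 2^h, and k = h + ⌈log₂ n⌉. Define V = Σ_{i=0}^{n−1} v_i 2^{k(n−1−i)} and U = Σ_{i=0}^{n−1} 2^{ki}. Then Σ_{i=0}^{n−1} v_i = (U·V / 2^{k(n−1)}) mod 2^k. -/

import Mathlib

open Finset

private lemma sum_digits_lt {B m : ℕ} (c : ℕ → ℕ) (h : ∀ d < m, c d < B) :
    (∑ d ∈ range m, c d * B ^ d) < B ^ m := by
  induction m with
  | zero => simp
  | succ m ih =>
    rw [Finset.sum_range_succ, pow_succ]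
    have h1 : (∑ d ∈ range m, c d * B ^ d) < B ^ m := ih fun d hd => h d (by omega)
    have h2 : c m < B := h m (by omega)
    calc (∑ d ∈ range m, c d * B ^ d) + c m * B ^ m
        < B ^ m + c m * B ^ m := by omega
      _ = (c m + 1) * B ^ m := by ring
      _ ≤ B * B ^ m := Nat.mul_le_mul_right _ (by omega)
      _ = B ^ m * B := by ring

theorem summation_binary_segmentation {n h : ℕ} (hn : 0 < n)
    (v : Fin n → ℕ) (hv : ∀ i, v i < 2 ^ h) :
    let k := h + Nat.clog 2 n
    let V := ∑ i : Fin n, v i * 2 ^ (k * (n - 1 - (i : ℕ)))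
    let U := ∑ i : Fin n, 2 ^ (k * (i : ℕ))
    (∑ i : Fin n, v i) = (U * V / 2 ^ (k * (n - 1))) % 2 ^ k := by
  intro k V U
  obtain ⟨m, rfl⟩ : ∃ m, n = m + 1 := ⟨n - 1, by omega⟩
  simp only [Nat.add_sub_cancel]
  set S := ∑ i : Fin (m + 1), v i with hS
  -- the sum is small
  have hn2 : m + 1 ≤ 2 ^ Nat.clog 2 (m + 1) := Nat.le_pow_clog one_lt_two (m + 1)
  have hSlt : S < 2 ^ k := by
    have h1 : S ≤ (m + 1) * (2 ^ h - 1) := by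
      calc S ≤ ∑ _i : Fin (m + 1), (2 ^ h - 1) :=
            Finset.sum_le_sum fun i _ => by have := hv i; omega
        _ = (m + 1) * (2 ^ h - 1) := by simp [Finset.sum_const, mul_comm]
    have hk : 2 ^ k = 2 ^ h * 2 ^ Nat.clog 2 (m + 1) := pow_add 2 h _
    have h0 : 0 < 2 ^ h := Nat.pow_pos (by norm_num)
    have h3 : 0 < 2 ^ Nat.clog 2 (m + 1) := Nat.pow_pos (by norm_num)
    have h2 : (m + 1) * (2 ^ h - 1) < 2 ^ k := by
      rw [hk]
      calc (m + 1) * (2 ^ h - 1) ≤ 2 ^ Nat.clog 2 (m + 1) * (2 ^ h - 1) :=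
            Nat.mul_le_mul_right _ hn2
        _ < 2 ^ Nat.clog 2 (m + 1) * 2 ^ h :=
            mul_lt_mul_of_pos_left (by omega) h3
        _ = 2 ^ h * 2 ^ Nat.clog 2 (m + 1) := mul_comm _ _
    omega
  -- digits of the product
  set c : ℕ → ℕ := fun d =>
    ∑ j : Fin (m + 1), if m - (j : ℕ) ≤ d ∧ d < m - (j : ℕ) + (m + 1) then v j else 0 with hc
  have hc_le : ∀ d, c d ≤ S := fun d =>
    Finset.sum_le_sum fun j _ => by split <;> simp
  have hc_lt : ∀ d, c d < 2 ^ k := fun d => lt_of_le_of_lt (hc_le d) hSlt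
  have key1 : U * V = ∑ d ∈ range (2 * m + 1), c d * 2 ^ (k * d) := by
    have hUr : U = ∑ i ∈ range (m + 1), 2 ^ (k * i) :=
      Fin.sum_univ_eq_sum_range (fun i => 2 ^ (k * i)) (m + 1)
    calc U * V = V * U := mul_comm _ _
      _ = ∑ j : Fin (m + 1), v j * 2 ^ (k * (m + 1 - 1 - (j : ℕ)))
            * (∑ i ∈ range (m + 1), 2 ^ (k * i)) := by
          rw [Finset.sum_mul, hUr]
      _ = ∑ j : Fin (m + 1), ∑ d ∈ Finset.Ico (m - (j : ℕ)) (m - (j : ℕ) + (m + 1)),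
            v j * 2 ^ (k * d) := by
          refine Finset.sum_congr rfl fun j _ => ?_
          rw [Finset.sum_Ico_eq_sum_range]
          simp only [Nat.add_sub_cancel, add_tsub_cancel_left]
          rw [Finset.mul_sum]
          refine Finset.sum_congr rfl fun i _ => ?_
          rw [Nat.mul_add, pow_add]; ring
      _ = ∑ j : Fin (m + 1), ∑ d ∈ range (2 * m + 1),
            if m - (j : ℕ) ≤ d ∧ d < m - (j : ℕ) + (m + 1) then v j * 2 ^ (k * d) else 0 := by
          refine Finset.sum_congr rfl fun j _ => ?_
          rw [← Finset.sum_filter]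
          congr 1
          ext d
          simp only [Finset.mem_filter, Finset.mem_range, Finset.mem_Ico]
          have hj : (j : ℕ) < m + 1 := j.isLt
          omega
      _ = ∑ d ∈ range (2 * m + 1), c d * 2 ^ (k * d) := by
          rw [Finset.sum_comm]
          refine Finset.sum_congr rfl fun d _ => ?_
          rw [hc]
          simp only [Finset.sum_mul, ite_mul, zero_mul]
  have key2 : c m = S := by
    rw [hc, hS]
    refine Finset.sum_congr rfl fun j _ => ?_
    have hj : (j : ℕ) < m + 1 := j.isLt
    rw [if_pos ⟨by omega, by omega⟩]
  -- split the sum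
  set A := ∑ d ∈ range m, c d * 2 ^ (k * d) with hA
  set B' := ∑ d ∈ range m, c (m + 1 + d) * 2 ^ (k * d) with hB'
  have hsplit : U * V = A + 2 ^ (k * m) * (S + 2 ^ k * B') := by
    rw [key1]
    have h2n : 2 * m + 1 = (m + 1) + m := by omega
    rw [h2n, Finset.sum_range_add, Finset.sum_range_succ]
    have hsecond : ∑ d ∈ range m, c (m + 1 + d) * 2 ^ (k * (m + 1 + d))
        = 2 ^ (k * m) * (2 ^ k * B') := by
      rw [hB', Finset.mul_sum, Finset.mul_sum]
      refine Finset.sum_congr rfl fun d _ => ?_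
      have he : k * (m + 1 + d) = k * m + (k + k * d) := by ring
      rw [he, pow_add, pow_add]; ring
    rw [hsecond, key2]; ring
  have hAlt : A < 2 ^ (k * m) := by
    have hlt := sum_digits_lt (B := 2 ^ k) (m := m) c fun d _ => hc_lt d
    calc A = ∑ d ∈ range m, c d * (2 ^ k) ^ d := by
          refine Finset.sum_congr rfl fun d _ => ?_
          rw [← pow_mul]
      _ < (2 ^ k) ^ m := hlt
      _ = 2 ^ (k * m) := by rw [← pow_mul]
  rw [hsplit]
  have hpos : 0 < 2 ^ (k * m) := Nat.pow_pos (by norm_num)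
  rw [mul_comm (2 ^ (k * m)) (S + 2 ^ k * B'), Nat.add_mul_div_right _ _ hpos,
    Nat.div_eq_of_lt hAlt, zero_add, mul_comm (2 ^ k) B', Nat.add_mul_mod_self_right,
    Nat.mod_eq_of_lt hSlt]
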